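/- For every φ ∈ (0, π/2), the iterated integral ∫₀¹ ( ∫₀ˢ 4·cos(φ)·(u² − 1)/(u⁴ − 2cos(2φ)u² + 1) du ) · ( 4i·sin(2φ)·s/(s⁴ − 2cos(2φ)s² + 1) ) ds equals 2πi·log(sin φ). -/

import Mathlib

open intervalIntegral

noncomputable def omQ (t s : ℝ) : ℝ := s^4 - 2*Real.cos (2*t)*s^2 + 1
noncomputable def omL (t s : ℝ) : ℝ :=
  Real.log (s^2 - 2*Real.cos t*s + 1) - Real.log (s^2 + 2*Real.cos t*s + 1)
noncomputable def omE (t s : ℝ) : ℝ := omL t s * (4*Real.sin (2*t)*s / omQ t s)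
noncomputable def omD (t s : ℝ) : ℝ :=
  16*Real.sin t*Real.sin (2*t)*s^2*(s^2+1)/(omQ t s)^2
  + omL t s * (8*s*Real.cos (2*t)/omQ t s - 16*Real.sin (2*t)^2*s^3/(omQ t s)^2)
noncomputable def omPsi (t s : ℝ) : ℝ :=
  2*(1-s^4)*omL t s/omQ t s
  + 4*(Real.cos t/Real.sin t)*(Real.arctan ((s-Real.cos t)/Real.sin t)
      + Real.arctan ((s+Real.cos t)/Real.sin t))

lemma cos_sq_lt_one (t : ℝ) (ht : 0 < Real.sin t) : Real.cos t ^ 2 < 1 := by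
  nlinarith [Real.sin_sq_add_cos_sq t]

lemma q1_pos (c s : ℝ) (hc : c^2 < 1) : 0 < s^2 - 2*c*s + 1 := by
  nlinarith [sq_nonneg (s - c)]

lemma q2_pos (c s : ℝ) (hc : c^2 < 1) : 0 < s^2 + 2*c*s + 1 := by
  nlinarith [sq_nonneg (s + c)]

lemma omQ_fact (t s : ℝ) :
    omQ t s = (s^2 - 2*Real.cos t*s + 1) * (s^2 + 2*Real.cos t*s + 1) := by
  rw [omQ, Real.cos_two_mul]; ring

lemma omQ_pos (t s : ℝ) (ht : 0 < Real.sin t) : 0 < omQ t s := by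
  rw [omQ_fact]
  exact mul_pos (q1_pos _ _ (cos_sq_lt_one t ht)) (q2_pos _ _ (cos_sq_lt_one t ht))

lemma hasDerivAt_omL (t s : ℝ) (hc : Real.cos t ^ 2 < 1) :
    HasDerivAt (fun u : ℝ => omL t u)
      ((2*s - 2*Real.cos t)/(s^2 - 2*Real.cos t*s + 1)
        - (2*s + 2*Real.cos t)/(s^2 + 2*Real.cos t*s + 1)) s := by
  have h1 : HasDerivAt (fun u : ℝ => u^2 - 2*Real.cos t*u + 1) (2*s - 2*Real.cos t) s := by
    have := ((hasDerivAt_pow 2 s).sub ((hasDerivAt_id s).const_mul (2*Real.cos t))).add_const 1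
    exact this.congr_deriv (by ring)
  have h2 : HasDerivAt (fun u : ℝ => u^2 + 2*Real.cos t*u + 1) (2*s + 2*Real.cos t) s := by
    have := ((hasDerivAt_pow 2 s).add ((hasDerivAt_id s).const_mul (2*Real.cos t))).add_const 1
    exact this.congr_deriv (by ring)
  have e1 : (s:ℝ)^2 - 2*Real.cos t*s + 1 ≠ 0 := by nlinarith [sq_nonneg (s - Real.cos t)]
  have e2 : (s:ℝ)^2 + 2*Real.cos t*s + 1 ≠ 0 := by nlinarith [sq_nonneg (s + Real.cos t)]
  exact (h1.log e1).sub (h2.log e2)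

lemma inner_eq (t : ℝ) (ht : 0 < Real.sin t) (s : ℝ) :
    ∫ u in (0:ℝ)..s, 4*Real.cos t*(u^2-1)/(u^4 - 2*Real.cos (2*t)*u^2 + 1) = omL t s := by
  have hc := cos_sq_lt_one t ht
  have key : ∀ u ∈ Set.uIcc (0:ℝ) s, HasDerivAt (fun v => omL t v)
      (4*Real.cos t*(u^2-1)/(u^4 - 2*Real.cos (2*t)*u^2 + 1)) u := by
    intro u _
    have h := hasDerivAt_omL t u hc
    convert h using 1
    have e1 := q1_pos (Real.cos t) u hc
    have e2 := q2_pos (Real.cos t) u hc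
    have hQ : u^4 - 2*Real.cos (2*t)*u^2 + 1
        = (u^2 - 2*Real.cos t*u + 1) * (u^2 + 2*Real.cos t*u + 1) := by
      rw [Real.cos_two_mul]; ring
    rw [hQ]
    rw [div_sub_div _ _ e1.ne' e2.ne']
    ring
  have hcont : Continuous (fun u : ℝ => 4*Real.cos t*(u^2-1)/(u^4 - 2*Real.cos (2*t)*u^2 + 1)) := by
    apply Continuous.div (by continuity) (by continuity)
    intro u
    have := omQ_pos t u ht
    rw [omQ] at this
    positivity
  have := intervalIntegral.integral_eq_sub_of_hasDerivAt key (hcont.intervalIntegrable 0 s)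
  rw [this]
  simp [omL]

lemma hasDerivAt_omE_t (s t : ℝ) (ht : 0 < Real.sin t) :
    HasDerivAt (fun τ => omE τ s) (omD t s) t := by
  have hc := cos_sq_lt_one t ht
  have e1 := ne_of_gt (q1_pos (Real.cos t) s hc)
  have e2 := ne_of_gt (q2_pos (Real.cos t) s hc)
  have eQ := ne_of_gt (omQ_pos t s ht)
  -- derivative of τ ↦ log(s²-2cos τ s+1)
  have h1 : HasDerivAt (fun τ : ℝ => s^2 - 2*Real.cos τ*s + 1) (2*Real.sin t*s) t := by
    have h' := ((((Real.hasDerivAt_cos t).const_mul (2:ℝ)).mul_const s).const_sub (s^2)).add_const 1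
    exact h'.congr_deriv (by ring)
  have h2 : HasDerivAt (fun τ : ℝ => s^2 + 2*Real.cos τ*s + 1) (-(2*Real.sin t*s)) t := by
    have h' := ((((Real.hasDerivAt_cos t).const_mul (2:ℝ)).mul_const s).const_add (s^2)).add_const 1
    exact h'.congr_deriv (by ring)
  have hL : HasDerivAt (fun τ => omL τ s)
      (2*Real.sin t*s/(s^2 - 2*Real.cos t*s + 1) + 2*Real.sin t*s/(s^2 + 2*Real.cos t*s + 1)) t := by
    have := (h1.log e1).sub (h2.log e2)
    refine this.congr_deriv (Eq.symm ?_)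
    ring
  -- derivative of τ ↦ sin(2τ)
  have hs2 : HasDerivAt (fun τ : ℝ => Real.sin (2*τ)) (2*Real.cos (2*t)) t := by
    have := (Real.hasDerivAt_sin (2*t)).comp t ((hasDerivAt_id t).const_mul 2)
    exact this.congr_deriv (by ring)
  -- derivative of τ ↦ omQ τ s
  have hQd : HasDerivAt (fun τ : ℝ => omQ τ s) (4*Real.sin (2*t)*s^2) t := by
    unfold omQ
    have hcos2 : HasDerivAt (fun τ : ℝ => Real.cos (2*τ)) (-(2*Real.sin (2*t))) t := by
      have := (Real.hasDerivAt_cos (2*t)).comp t ((hasDerivAt_id t).const_mul 2)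
      exact this.congr_deriv (by ring)
    have h' := (((hcos2.const_mul (2:ℝ)).mul_const (s^2)).const_sub (s^4)).add_const 1
    exact h'.congr_deriv (by ring)
  -- derivative of τ ↦ 4 sin 2τ s / omQ τ s
  have hM : HasDerivAt (fun τ : ℝ => 4*Real.sin (2*τ)*s / omQ τ s)
      ((8*Real.cos (2*t)*s * omQ t s - 4*Real.sin (2*t)*s*(4*Real.sin (2*t)*s^2))/(omQ t s)^2) t := by
    have hnum : HasDerivAt (fun τ : ℝ => 4*Real.sin (2*τ)*s) (8*Real.cos (2*t)*s) t := by
      have := (hs2.const_mul (4:ℝ)).mul_const s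
      exact this.congr_deriv (by ring)
    exact hnum.div hQd eQ
  have := hL.mul (hM)
  have goal : HasDerivAt (fun τ => omE τ s)
      ((2*Real.sin t*s/(s^2 - 2*Real.cos t*s + 1) + 2*Real.sin t*s/(s^2 + 2*Real.cos t*s + 1))
          * (4*Real.sin (2*t)*s / omQ t s)
        + omL t s *
          ((8*Real.cos (2*t)*s * omQ t s - 4*Real.sin (2*t)*s*(4*Real.sin (2*t)*s^2))/(omQ t s)^2)) t := by
    exact this
  refine goal.congr_deriv (Eq.symm ?_)
  unfold omD
  rw [omQ_fact t s]
  have e1' : s*(s-2*Real.cos t)+1 ≠ 0 := by convert e1 using 1; ring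
  have e2' : s*(s+2*Real.cos t)+1 ≠ 0 := by convert e2 using 1; ring
  field_simp
  ring

-- arctan part derivative
lemma hasDerivAt_arctans (t s : ℝ) (ht : 0 < Real.sin t) :
    HasDerivAt (fun u : ℝ => Real.arctan ((u-Real.cos t)/Real.sin t)
        + Real.arctan ((u+Real.cos t)/Real.sin t))
      (Real.sin t/(s^2 - 2*Real.cos t*s + 1) + Real.sin t/(s^2 + 2*Real.cos t*s + 1)) s := by
  have hσ : Real.sin t ≠ 0 := ne_of_gt ht
  have hpy := Real.sin_sq_add_cos_sq t
  have i1 : HasDerivAt (fun u : ℝ => (u-Real.cos t)/Real.sin t) (1/Real.sin t) s :=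
    ((hasDerivAt_id s).sub_const (Real.cos t)).div_const (Real.sin t)
  have i2 : HasDerivAt (fun u : ℝ => (u+Real.cos t)/Real.sin t) (1/Real.sin t) s :=
    ((hasDerivAt_id s).add_const (Real.cos t)).div_const (Real.sin t)
  have a1 := (Real.hasDerivAt_arctan ((s-Real.cos t)/Real.sin t)).comp s i1
  have a2 := (Real.hasDerivAt_arctan ((s+Real.cos t)/Real.sin t)).comp s i2
  have := a1.add a2
  refine this.congr_deriv (Eq.symm ?_)
  have d1 : (1 + ((s-Real.cos t)/Real.sin t)^2) = (s^2 - 2*Real.cos t*s + 1)/Real.sin t^2 := by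
    field_simp
    linear_combination hpy
  have d2 : (1 + ((s+Real.cos t)/Real.sin t)^2) = (s^2 + 2*Real.cos t*s + 1)/Real.sin t^2 := by
    field_simp
    linear_combination hpy
  rw [d1, d2]
  have e1 := ne_of_gt (q1_pos (Real.cos t) s (cos_sq_lt_one t ht))
  have e2 := ne_of_gt (q2_pos (Real.cos t) s (cos_sq_lt_one t ht))
  have e1' : s*(s-2*Real.cos t)+1 ≠ 0 := by convert e1 using 1; ring
  have e2' : s*(s+2*Real.cos t)+1 ≠ 0 := by convert e2 using 1; ring
  field_simp


lemma algFull (s c σ l : ℝ) (hσ : σ ≠ 0) (h1 : s^2-2*c*s+1 ≠ 0) (h2 : s^2+2*c*s+1 ≠ 0)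
    (hpy : σ^2 = 1 - c^2) :
    16 * σ * (2 * σ * c) * s ^ 2 * (s ^ 2 + 1) / ((s ^ 2 - 2 * c * s + 1) * (s ^ 2 + 2 * c * s + 1)) ^ 2 +
      l * (8 * s * (2 * c ^ 2 - 1) / ((s ^ 2 - 2 * c * s + 1) * (s ^ 2 + 2 * c * s + 1)) -
          16 * (2 * σ * c) ^ 2 * s ^ 3 / ((s ^ 2 - 2 * c * s + 1) * (s ^ 2 + 2 * c * s + 1)) ^ 2) =
    ((-8 * s ^ 3 * l +
              2 * (1 - s ^ 4) *
                ((2 * s - 2 * c) / (s ^ 2 - 2 * c * s + 1) - (2 * s + 2 * c) / (s ^ 2 + 2 * c * s + 1))) *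
            ((s ^ 2 - 2 * c * s + 1) * (s ^ 2 + 2 * c * s + 1)) -
          2 * (1 - s ^ 4) * l * (4 * s ^ 3 - 4 * (2 * c ^ 2 - 1) * s)) /
        ((s ^ 2 - 2 * c * s + 1) * (s ^ 2 + 2 * c * s + 1)) ^ 2 +
      4 * (c / σ) * (σ / (s ^ 2 - 2 * c * s + 1) + σ / (s ^ 2 + 2 * c * s + 1)) := by
  have hK : (s^2-2*c*s+1)*(s^2+2*c*s+1) ≠ 0 := mul_ne_zero h1 h2
  have h1' : s*(s-2*c)+1 ≠ 0 := by convert h1 using 1; ring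
  have h2' : s*(s+2*c)+1 ≠ 0 := by convert h2 using 1; ring
  generalize hG : (s^2-2*c*s+1)*(s^2+2*c*s+1) = K at hK ⊢
  have hLD : (2*s - 2*c)/(s^2-2*c*s+1) - (2*s + 2*c)/(s^2+2*c*s+1) = 4*c*(s^2-1)/K := by
    rw [← hG]; field_simp; ring
  have harc : 4*(c/σ)*(σ/(s^2-2*c*s+1) + σ/(s^2+2*c*s+1)) = 8*c*(s^2+1)/K := by
    rw [← hG, div_add_div _ _ h1 h2, ← mul_div_assoc, div_left_inj' (mul_ne_zero h1 h2)]; field_simp; ring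
  rw [hLD]
  rw [show (4:ℝ) * (c / σ) * (σ / (s ^ 2 - 2 * c * s + 1) + σ / (s ^ 2 + 2 * c * s + 1))
      = 8*c*(s^2+1)/K from harc]
  have r1 : (16:ℝ) * σ * (2 * σ * c) * s ^ 2 * (s ^ 2 + 1) = 32*(1-c^2)*c*s^2*(s^2+1) := by
    linear_combination (32*c*s^2*(s^2+1)) * hpy
  have r2 : (16:ℝ) * (2 * σ * c) ^ 2 * s ^ 3 = 64*(1-c^2)*c^2*s^3 := by
    linear_combination (64*c^2*s^3) * hpy
  rw [r1, r2]
  have eL : 32*(1-c^2)*c*s^2*(s^2+1) / K ^ 2 +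
      l * (8 * s * (2 * c ^ 2 - 1) / K - 64*(1-c^2)*c^2*s^3 / K ^ 2)
      = (32*(1-c^2)*c*s^2*(s^2+1) + l*(8*s*(2*c^2-1)*K - 64*(1-c^2)*c^2*s^3)) / K^2 := by
    field_simp
  have eR : ((-8 * s ^ 3 * l + 2 * (1 - s ^ 4) * (4*c*(s^2-1)/K)) * K -
          2 * (1 - s ^ 4) * l * (4 * s ^ 3 - 4 * (2 * c ^ 2 - 1) * s)) / K ^ 2 +
        8*c*(s^2+1)/K
      = ((-8 * s ^ 3 * l)*K + 8*c*(1-s^4)*(s^2-1) -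
          2 * (1 - s ^ 4) * l * (4 * s ^ 3 - 4 * (2 * c ^ 2 - 1) * s) + 8*c*(s^2+1)*K) / K^2 := by
    field_simp; ring
  rw [eL, eR, ← hG]
  congr 1
  ring

lemma hasDerivAt_omPsi (t s : ℝ) (ht : 0 < Real.sin t) :
    HasDerivAt (fun u => omPsi t u) (omD t s) s := by
  have hc := cos_sq_lt_one t ht
  have hσ : Real.sin t ≠ 0 := ne_of_gt ht
  have hpy := Real.sin_sq_add_cos_sq t
  have e1 := ne_of_gt (q1_pos (Real.cos t) s hc)
  have e2 := ne_of_gt (q2_pos (Real.cos t) s hc)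
  have eQ := ne_of_gt (omQ_pos t s ht)
  have hL := hasDerivAt_omL t s hc
  have p1 : HasDerivAt (fun u : ℝ => 2*(1-u^4)) (-8*s^3) s := by
    have := ((hasDerivAt_pow 4 s).const_sub 1).const_mul (2:ℝ)
    exact this.congr_deriv (by ring)
  have hN := p1.mul hL
  have hQs : HasDerivAt (fun u : ℝ => omQ t u) (4*s^3 - 4*Real.cos (2*t)*s) s := by
    unfold omQ
    have := ((hasDerivAt_pow 4 s).sub (((hasDerivAt_pow 2 s)).const_mul
      (2*Real.cos (2*t)))).add_const 1
    exact this.congr_deriv (by ring)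
  have hquot := hN.div hQs eQ
  have harc := (hasDerivAt_arctans t s ht).const_mul (4*(Real.cos t/Real.sin t))
  have total := hquot.add harc
  have shape : HasDerivAt (fun u => omPsi t u)
      (((-8*s^3 * omL t s + 2*(1-s^4) *
          ((2*s - 2*Real.cos t)/(s^2 - 2*Real.cos t*s + 1)
            - (2*s + 2*Real.cos t)/(s^2 + 2*Real.cos t*s + 1))) * omQ t s
        - 2*(1-s^4)*omL t s * (4*s^3 - 4*Real.cos (2*t)*s)) / (omQ t s)^2
       + 4*(Real.cos t/Real.sin t) * (Real.sin t/(s^2 - 2*Real.cos t*s + 1)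
            + Real.sin t/(s^2 + 2*Real.cos t*s + 1))) s := by
    unfold omPsi
    exact total
  refine shape.congr_deriv (Eq.symm ?_)
  unfold omD
  rw [Real.sin_two_mul, Real.cos_two_mul, omQ_fact t s]
  exact algFull s (Real.cos t) (Real.sin t) (omL t s) hσ e1 e2
    (by linear_combination hpy)

-- continuity of omD in s (fixed t)
lemma contD_s (t : ℝ) (ht : 0 < Real.sin t) : Continuous (fun s => omD t s) := by
  have hQ : ∀ s : ℝ, omQ t s ≠ 0 := fun s => ne_of_gt (omQ_pos t s ht)
  have h1 : ∀ s : ℝ, s^2 - 2*Real.cos t*s + 1 ≠ 0 :=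
    fun s => ne_of_gt (q1_pos _ s (cos_sq_lt_one t ht))
  have h2 : ∀ s : ℝ, s^2 + 2*Real.cos t*s + 1 ≠ 0 :=
    fun s => ne_of_gt (q2_pos _ s (cos_sq_lt_one t ht))
  have cQ : Continuous (fun s : ℝ => omQ t s) := by unfold omQ; continuity
  have cL : Continuous (fun s : ℝ => omL t s) := by
    unfold omL
    have p1 : Continuous (fun s : ℝ => s^2 - 2*Real.cos t*s + 1) := by continuity
    have p2 : Continuous (fun s : ℝ => s^2 + 2*Real.cos t*s + 1) := by continuity
    exact (p1.log h1).sub (p2.log h2)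
  unfold omD
  apply Continuous.add
  · exact (by continuity : Continuous fun s : ℝ =>
      16*Real.sin t*Real.sin (2*t)*s^2*(s^2+1)).div (cQ.pow 2)
      (fun s => pow_ne_zero 2 (hQ s))
  · exact cL.mul (((by continuity : Continuous fun s : ℝ => 8*s*Real.cos (2*t)).div cQ hQ).sub
      ((by continuity : Continuous fun s : ℝ => 16*Real.sin (2*t)^2*s^3).div (cQ.pow 2)
        (fun s => pow_ne_zero 2 (hQ s))))

lemma intD (t : ℝ) (ht : 0 < Real.sin t) :
    ∫ s in (0:ℝ)..1, omD t s = 2*Real.pi*(Real.cos t/Real.sin t) := by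
  have hσ : Real.sin t ≠ 0 := ne_of_gt ht
  have hc2 := cos_sq_lt_one t ht
  have hc1 : Real.cos t < 1 := by nlinarith
  have hcm : -1 < Real.cos t := by nlinarith
  have key := intervalIntegral.integral_eq_sub_of_hasDerivAt
    (f := fun s => omPsi t s) (f' := fun s => omD t s)
    (fun s _ => hasDerivAt_omPsi t s ht)
    ((contD_s t ht).intervalIntegrable 0 1)
  rw [key]
  have hPsi0 : omPsi t 0 = 0 := by
    unfold omPsi omL
    rw [show ((0:ℝ)^2 - 2*Real.cos t*0 + 1) = 1 by ring,
      show ((0:ℝ)^2 + 2*Real.cos t*0 + 1) = 1 by ring, Real.log_one,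
      show ((0:ℝ) - Real.cos t)/Real.sin t = -(Real.cos t/Real.sin t) by ring,
      Real.arctan_neg,
      show ((0:ℝ) + Real.cos t)/Real.sin t = Real.cos t/Real.sin t by ring]
    ring
  have hPsi1 : omPsi t 1 = 2*Real.pi*(Real.cos t/Real.sin t) := by
    unfold omPsi
    have hx : 0 < (1 - Real.cos t)/Real.sin t := div_pos (by linarith) ht
    have hinv : (1 + Real.cos t)/Real.sin t = ((1 - Real.cos t)/Real.sin t)⁻¹ := by
      rw [inv_div]
      rw [div_eq_div_iff hσ (by linarith : (1:ℝ) - Real.cos t ≠ 0)]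
      nlinarith [Real.sin_sq_add_cos_sq t]
    rw [hinv, Real.arctan_inv_of_pos hx]
    ring
  simp only [hPsi0, hPsi1]
  ring

lemma contD_swap : ContinuousOn (fun p : ℝ × ℝ => omD p.2 p.1)
    {p : ℝ × ℝ | 0 < Real.sin p.2} := by
  set U : Set (ℝ × ℝ) := {p : ℝ × ℝ | 0 < Real.sin p.2}
  have hQ : ∀ p ∈ U, omQ p.2 p.1 ≠ 0 := fun p hp => ne_of_gt (omQ_pos p.2 p.1 hp)
  have h1 : ∀ p ∈ U, p.1^2 - 2*Real.cos p.2*p.1 + 1 ≠ 0 :=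
    fun p hp => ne_of_gt (q1_pos _ _ (cos_sq_lt_one p.2 hp))
  have h2 : ∀ p ∈ U, p.1^2 + 2*Real.cos p.2*p.1 + 1 ≠ 0 :=
    fun p hp => ne_of_gt (q2_pos _ _ (cos_sq_lt_one p.2 hp))
  have cQ : Continuous (fun p : ℝ × ℝ => omQ p.2 p.1) := by unfold omQ; fun_prop
  have cL : ContinuousOn (fun p : ℝ × ℝ => omL p.2 p.1) U := by
    unfold omL
    have p1 : Continuous (fun p : ℝ × ℝ => p.1^2 - 2*Real.cos p.2*p.1 + 1) := by fun_prop
    have p2 : Continuous (fun p : ℝ × ℝ => p.1^2 + 2*Real.cos p.2*p.1 + 1) := by fun_prop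
    exact (p1.continuousOn.log h1).sub (p2.continuousOn.log h2)
  unfold omD
  apply ContinuousOn.add
  · exact (by fun_prop : Continuous fun p : ℝ × ℝ =>
        16*Real.sin p.2*Real.sin (2*p.2)*p.1^2*(p.1^2+1)).continuousOn.div
      ((cQ.pow 2).continuousOn) (fun p hp => pow_ne_zero 2 (hQ p hp))
  · refine cL.mul (ContinuousOn.sub ?_ ?_)
    · exact (by fun_prop : Continuous fun p : ℝ × ℝ =>
          8*p.1*Real.cos (2*p.2)).continuousOn.div cQ.continuousOn hQ
    · exact (by fun_prop : Continuous fun p : ℝ × ℝ =>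
          16*Real.sin (2*p.2)^2*p.1^3).continuousOn.div
        ((cQ.pow 2).continuousOn) (fun p hp => pow_ne_zero 2 (hQ p hp))

lemma contD_t (s : ℝ) : ContinuousOn (fun t => omD t s) {t : ℝ | 0 < Real.sin t} := by
  set U : Set ℝ := {t : ℝ | 0 < Real.sin t}
  have hQ : ∀ t ∈ U, omQ t s ≠ 0 := fun t ht => ne_of_gt (omQ_pos t s ht)
  have h1 : ∀ t ∈ U, s^2 - 2*Real.cos t*s + 1 ≠ 0 :=
    fun t ht => ne_of_gt (q1_pos _ _ (cos_sq_lt_one t ht))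
  have h2 : ∀ t ∈ U, s^2 + 2*Real.cos t*s + 1 ≠ 0 :=
    fun t ht => ne_of_gt (q2_pos _ _ (cos_sq_lt_one t ht))
  have cQ : Continuous (fun t : ℝ => omQ t s) := by unfold omQ; fun_prop
  have cL : ContinuousOn (fun t : ℝ => omL t s) U := by
    unfold omL
    have p1 : Continuous (fun t : ℝ => s^2 - 2*Real.cos t*s + 1) := by fun_prop
    have p2 : Continuous (fun t : ℝ => s^2 + 2*Real.cos t*s + 1) := by fun_prop
    exact (p1.continuousOn.log h1).sub (p2.continuousOn.log h2)
  unfold omD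
  apply ContinuousOn.add
  · exact (by fun_prop : Continuous fun t : ℝ =>
        16*Real.sin t*Real.sin (2*t)*s^2*(s^2+1)).continuousOn.div
      ((cQ.pow 2).continuousOn) (fun t ht => pow_ne_zero 2 (hQ t ht))
  · refine cL.mul (ContinuousOn.sub ?_ ?_)
    · exact (by fun_prop : Continuous fun t : ℝ =>
          8*s*Real.cos (2*t)).continuousOn.div cQ.continuousOn hQ
    · exact (by fun_prop : Continuous fun t : ℝ =>
          16*Real.sin (2*t)^2*s^3).continuousOn.div
        ((cQ.pow 2).continuousOn) (fun t ht => pow_ne_zero 2 (hQ t ht))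

set_option maxHeartbeats 1600000 in
lemma omE_eq (φ s : ℝ) (h0 : 0 < φ) (h1 : φ < Real.pi/2) :
    omE φ s = -∫ t in φ..(Real.pi/2), omD t s := by
  have hmem : ∀ t ∈ Set.uIcc φ (Real.pi/2), 0 < Real.sin t := by
    intro t htm
    rw [Set.uIcc_of_le (le_of_lt h1)] at htm
    exact Real.sin_pos_of_pos_of_lt_pi (lt_of_lt_of_le h0 htm.1)
      (lt_of_le_of_lt htm.2 (by linarith [Real.pi_pos]))
  have hint : IntervalIntegrable (fun t => omD t s) MeasureTheory.volume φ (Real.pi/2) := by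
    exact ContinuousOn.intervalIntegrable ((contD_t s).mono (fun t htm => hmem t htm))
  have key := intervalIntegral.integral_eq_sub_of_hasDerivAt
    (f := fun t => omE t s) (f' := fun t => omD t s)
    (fun t htm => hasDerivAt_omE_t s t (hmem t htm)) hint
  rw [key]
  have : omE (Real.pi/2) s = 0 := by
    unfold omE
    rw [show 2*(Real.pi/2) = Real.pi by ring, Real.sin_pi]
    simp
  simp only [this]
  ring

lemma sin_pos_on (φ : ℝ) (h0 : 0 < φ) (h1 : φ < Real.pi/2) :
    ∀ t ∈ Set.Icc φ (Real.pi/2), 0 < Real.sin t := fun t htm =>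
  Real.sin_pos_of_pos_of_lt_pi (lt_of_lt_of_le h0 htm.1)
    (lt_of_le_of_lt htm.2 (by linarith [Real.pi_pos]))

lemma fubini_step (φ : ℝ) (h0 : 0 < φ) (h1 : φ < Real.pi/2) :
    ∫ s in (0:ℝ)..1, (∫ t in φ..(Real.pi/2), omD t s)
      = ∫ t in φ..(Real.pi/2), (∫ s in (0:ℝ)..1, omD t s) := by
  have hle1 : (0:ℝ) ≤ 1 := zero_le_one
  have hle2 : φ ≤ Real.pi/2 := le_of_lt h1
  simp only [intervalIntegral.integral_of_le hle1, intervalIntegral.integral_of_le hle2]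
  apply MeasureTheory.integral_integral_swap (f := fun s t => omD t s)
  rw [MeasureTheory.Measure.prod_restrict]
  apply MeasureTheory.IntegrableOn.mono_set
    (t := Set.Icc (0:ℝ) 1 ×ˢ Set.Icc φ (Real.pi/2))
  · apply ContinuousOn.integrableOn_compact (isCompact_Icc.prod isCompact_Icc)
    exact contD_swap.mono (fun p hp => sin_pos_on φ h0 h1 p.2 hp.2)
  · exact Set.prod_mono Set.Ioc_subset_Icc_self Set.Ioc_subset_Icc_self

lemma cot_integral (φ : ℝ) (h0 : 0 < φ) (h1 : φ < Real.pi/2) :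
    ∫ t in φ..(Real.pi/2), 2*Real.pi*(Real.cos t/Real.sin t)
      = -(2*Real.pi*Real.log (Real.sin φ)) := by
  have hpos := sin_pos_on φ h0 h1
  have key := intervalIntegral.integral_eq_sub_of_hasDerivAt
    (f := fun t => 2*Real.pi*Real.log (Real.sin t))
    (f' := fun t => 2*Real.pi*(Real.cos t/Real.sin t))
    (fun t htm => by
      have htm' : t ∈ Set.Icc φ (Real.pi/2) := by
        rwa [Set.uIcc_of_le (le_of_lt h1)] at htm
      exact ((Real.hasDerivAt_sin t).log (ne_of_gt (hpos t htm'))).const_mul (2*Real.pi))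
    (by
      apply ContinuousOn.intervalIntegrable
      rw [Set.uIcc_of_le (le_of_lt h1)]
      exact (Real.continuous_cos.continuousOn.div Real.continuous_sin.continuousOn
        (fun t htm => ne_of_gt (hpos t htm))).const_smul (2*Real.pi) |>.congr
          (fun t _ => by simp [smul_eq_mul]))
  rw [key]
  simp only [Real.sin_pi_div_two, Real.log_one]
  ring

lemma W_eq (φ : ℝ) (h0 : 0 < φ) (h1 : φ < Real.pi/2) :
    ∫ s in (0:ℝ)..1, omE φ s = 2*Real.pi*Real.log (Real.sin φ) := by
  have step1 : ∫ s in (0:ℝ)..1, omE φ s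
      = ∫ s in (0:ℝ)..1, -(∫ t in φ..(Real.pi/2), omD t s) := by
    apply intervalIntegral.integral_congr
    intro s _
    simpa using omE_eq φ s h0 h1
  rw [step1, intervalIntegral.integral_neg, fubini_step φ h0 h1]
  have step2 : ∫ t in φ..(Real.pi/2), (∫ s in (0:ℝ)..1, omD t s)
      = ∫ t in φ..(Real.pi/2), 2*Real.pi*(Real.cos t/Real.sin t) := by
    apply intervalIntegral.integral_congr
    intro t htm
    have htm' : t ∈ Set.Icc φ (Real.pi/2) := by
      rwa [Set.uIcc_of_le (le_of_lt h1)] at htm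
    exact intD t (sin_pos_on φ h0 h1 t htm')
  rw [step2, cot_integral φ h0 h1]
  ring

theorem omega21_depth_two_iterated_integral
    (φ : ℝ) (h0 : 0 < φ) (h1 : φ < Real.pi / 2) :
    (∫ s in (0:ℝ)..1,
        (∫ u in (0:ℝ)..s,
          ((4 * Real.cos φ * (u ^ 2 - 1) / (u ^ 4 - 2 * Real.cos (2 * φ) * u ^ 2 + 1) : ℝ) : ℂ))
        * (4 * Complex.I * (Real.sin (2 * φ) : ℂ) * (s : ℂ)
            / ((s : ℂ) ^ 4 - 2 * (Real.cos (2 * φ) : ℂ) * (s : ℂ) ^ 2 + 1)))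
      = 2 * (Real.pi : ℂ) * Complex.I * (Real.log (Real.sin φ) : ℂ) := by
  have hsφ : 0 < Real.sin φ :=
    Real.sin_pos_of_pos_of_lt_pi h0 (by linarith [Real.pi_pos])
  have hEq : Set.EqOn
      (fun s : ℝ =>
        (∫ u in (0:ℝ)..s,
          ((4 * Real.cos φ * (u ^ 2 - 1) / (u ^ 4 - 2 * Real.cos (2 * φ) * u ^ 2 + 1) : ℝ) : ℂ))
        * (4 * Complex.I * (Real.sin (2 * φ) : ℂ) * (s : ℂ)
            / ((s : ℂ) ^ 4 - 2 * (Real.cos (2 * φ) : ℂ) * (s : ℂ) ^ 2 + 1)))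
      (fun s : ℝ => Complex.I * ((omE φ s : ℝ) : ℂ)) (Set.uIcc (0:ℝ) 1) := by
    intro s _
    have hin : (∫ u in (0:ℝ)..s,
        ((4 * Real.cos φ * (u ^ 2 - 1) / (u ^ 4 - 2 * Real.cos (2 * φ) * u ^ 2 + 1) : ℝ) : ℂ))
        = ((omL φ s : ℝ) : ℂ) := by
      rw [intervalIntegral.integral_ofReal]
      norm_cast
      exact inner_eq φ hsφ s
    simp only [hin]
    have hcast : (((omQ φ s : ℝ)) : ℂ)
        = (s:ℂ)^4 - 2*((Real.cos (2*φ) : ℝ):ℂ)*(s:ℂ)^2 + 1 := by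
      unfold omQ; push_cast; ring
    rw [omE, ← hcast]
    push_cast
    ring
  rw [intervalIntegral.integral_congr hEq]
  rw [intervalIntegral.integral_const_mul]
  rw [intervalIntegral.integral_ofReal]
  rw [W_eq φ h0 h1]
  push_cast
  ring
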